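/- In QHC, ⊢ ∇(∇α ∨ ¬∇α) → (∇α ↔ ¬¬α), where ∇α := !?α. -/
import Mathlib


/- Problem (intuitionistic) formulas and proposition (classical) formulas of QHC. -/
mutual
inductive PF : Type
  | var : Nat → PF
  | bot : PF
  | and : PF → PF → PF
  | or : PF → PF → PF
  | imp : PF → PF → PF
  | bang : CF → PF
inductive CF : Type
  | var : Nat → CF
  | fls : CF
  | and : CF → CF → CF
  | or : CF → CF → CF
  | imp : CF → CF → CF
  | quest : PF → CF
end

def PF.neg (α : PF) : PF := α.imp PF.bot
def CF.neg (p : CF) : CF := p.imp CF.fls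
def PF.iff (α β : PF) : PF := (α.imp β).and (β.imp α)
def CF.iff (p q : CF) : CF := (p.imp q).and (q.imp p)
def CF.box (p : CF) : CF := CF.quest (PF.bang p)
def PF.nabla (α : PF) : PF := PF.bang (CF.quest α)

/- Derivability in QHC, parameterized by a set `Ax` of extra problem axioms
(used to treat the axiom ¬!0 and its variants uniformly). Intuitionistic logic
on problems, classical logic on propositions, the rules α ⊢ ?α and p ⊢ !p, and
the mixed axioms ?!p → p, α → !?α, !(p→q) → (!p → !q), ?(α→β) → (?α → ?β). -/
mutual
inductive ProvP (Ax : PF → Prop) : PF → Prop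
  | axm {α} : Ax α → ProvP Ax α
  | mp {α β} : ProvP Ax (α.imp β) → ProvP Ax α → ProvP Ax β
  | ak (α β : PF) : ProvP Ax (α.imp (β.imp α))
  | as (α β γ : PF) : ProvP Ax ((α.imp (β.imp γ)).imp ((α.imp β).imp (α.imp γ)))
  | andI (α β : PF) : ProvP Ax (α.imp (β.imp (α.and β)))
  | andE1 (α β : PF) : ProvP Ax ((α.and β).imp α)
  | andE2 (α β : PF) : ProvP Ax ((α.and β).imp β)
  | orI1 (α β : PF) : ProvP Ax (α.imp (α.or β))
  | orI2 (α β : PF) : ProvP Ax (β.imp (α.or β))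
  | orE (α β γ : PF) : ProvP Ax ((α.imp γ).imp ((β.imp γ).imp ((α.or β).imp γ)))
  | exf (α : PF) : ProvP Ax (PF.bot.imp α)
  | bangIntro {p} : ProvC Ax p → ProvP Ax (PF.bang p)
  | bangImp (p q : CF) : ProvP Ax ((PF.bang (p.imp q)).imp ((PF.bang p).imp (PF.bang q)))
  | bangQuest (α : PF) : ProvP Ax (α.imp (PF.bang (CF.quest α)))
inductive ProvC (Ax : PF → Prop) : CF → Prop
  | mp {p q} : ProvC Ax (p.imp q) → ProvC Ax p → ProvC Ax q
  | ak (p q : CF) : ProvC Ax (p.imp (q.imp p))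
  | as (p q r : CF) : ProvC Ax ((p.imp (q.imp r)).imp ((p.imp q).imp (p.imp r)))
  | andI (p q : CF) : ProvC Ax (p.imp (q.imp (p.and q)))
  | andE1 (p q : CF) : ProvC Ax ((p.and q).imp p)
  | andE2 (p q : CF) : ProvC Ax ((p.and q).imp q)
  | orI1 (p q : CF) : ProvC Ax (p.imp (p.or q))
  | orI2 (p q : CF) : ProvC Ax (q.imp (p.or q))
  | orE (p q r : CF) : ProvC Ax ((p.imp r).imp ((q.imp r).imp ((p.or q).imp r)))
  | exf (p : CF) : ProvC Ax (CF.fls.imp p)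
  | lem (p : CF) : ProvC Ax (p.or (p.imp CF.fls))
  | questIntro {α} : ProvP Ax α → ProvC Ax (CF.quest α)
  | questImp (α β : PF) : ProvC Ax ((CF.quest (α.imp β)).imp ((CF.quest α).imp (CF.quest β)))
  | questBang (p : CF) : ProvC Ax ((CF.quest (PF.bang p)).imp p)
end

/-- The axiom (!⊥): ¬!0. -/
def QHCAx : PF → Prop := fun α => α = (PF.bang CF.fls).imp PF.bot

/-- Derivability of a problem in QHC. -/
def PrvP (α : PF) : Prop := ProvP QHCAx α
/-- Derivability of a proposition in QHC. -/
def PrvC (p : CF) : Prop := ProvC QHCAx p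

namespace QHCProof

variable {Ax : PF → Prop}

open ProvP ProvC

/-- Lift: from ⊢β get ⊢α→β. -/
theorem liftK {β : PF} (α : PF) (h : ProvP Ax β) : ProvP Ax (α.imp β) :=
  (ak β α).mp h

/-- Monotone under context: from ⊢β→γ get ⊢(α→β)→(α→γ). -/
theorem monoCtx {β γ : PF} (α : PF) (h : ProvP Ax (β.imp γ)) :
    ProvP Ax ((α.imp β).imp (α.imp γ)) :=
  (as α β γ).mp (liftK α h)

/-- Composition rule. -/
theorem comp {α β γ : PF} (h1 : ProvP Ax (α.imp β)) (h2 : ProvP Ax (β.imp γ)) :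
    ProvP Ax (α.imp γ) :=
  (monoCtx α h2).mp h1

/-- Identity. -/
theorem idP (α : PF) : ProvP Ax (α.imp α) :=
  ((as α (α.imp α) α).mp (ak α (α.imp α))).mp (ak α α)

/-- Swap rule: from ⊢a→b→c get ⊢b→a→c. -/
theorem swapR {a b c : PF} (h : ProvP Ax (a.imp (b.imp c))) :
    ProvP Ax (b.imp (a.imp c)) :=
  comp (ak b a) ((as a b c).mp h)

/-- Precompose: from ⊢X→Y get ⊢(Y→Z)→(X→Z). -/
theorem precomp {X Y : PF} (Z : PF) (h : ProvP Ax (X.imp Y)) :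
    ProvP Ax ((Y.imp Z).imp (X.imp Z)) :=
  comp (ak (Y.imp Z) X) ((swapR (as X Y Z)).mp h)

/-- Formula-level C combinator. -/
theorem cForm (a b c : PF) : ProvP Ax ((a.imp (b.imp c)).imp (b.imp (a.imp c))) :=
  comp (as a b c) (precomp (a.imp c) (ak b a))

/-- ProvC composition. -/
theorem compC {p q r : CF} (h1 : ProvC Ax (p.imp q)) (h2 : ProvC Ax (q.imp r)) :
    ProvC Ax (p.imp r) :=
  ((ProvC.as p q r).mp ((ProvC.ak (q.imp r) p).mp h2)).mp h1

/-- Bang monotone. -/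
theorem bangMono {p q : CF} (h : ProvC Ax (p.imp q)) :
    ProvP Ax ((PF.bang p).imp (PF.bang q)) :=
  (bangImp p q).mp (bangIntro h)

/-- Nabla of a theorem. -/
theorem nablaThm {α : PF} (h : ProvP Ax α) : ProvP Ax α.nabla :=
  (bangQuest α).mp h

/-- Nabla monotone. -/
theorem nablaMono {α β : PF} (h : ProvP Ax (α.imp β)) :
    ProvP Ax (α.nabla.imp β.nabla) :=
  bangMono ((ProvC.questImp α β).mp (ProvC.questIntro h))

/-- ∇ distributes over implication. -/
theorem nablaDist (α β : PF) :
    ProvP Ax ((α.imp β).nabla.imp (α.nabla.imp β.nabla)) :=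
  comp (bangMono (ProvC.questImp α β)) (bangImp (CF.quest α) (CF.quest β))

/-- ∇∇α → ∇α. -/
theorem nablaNabla (α : PF) : ProvP Ax (α.nabla.nabla.imp α.nabla) :=
  bangMono (ProvC.questBang (CF.quest α))

/-- ?⊥ → fls. -/
theorem questBotFls : ProvC Ax ((CF.quest PF.bot).imp CF.fls) :=
  compC ((ProvC.questImp PF.bot (PF.bang CF.fls)).mp
      (ProvC.questIntro (ProvP.exf (PF.bang CF.fls))))
    (ProvC.questBang CF.fls)

/-- In QHC: ∇⊥ → ⊥. -/
theorem nablaBot : ProvP QHCAx (PF.bot.nabla.imp PF.bot) :=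
  comp (bangMono questBotFls) (ProvP.axm rfl)

/-- ¬α → ¬∇α in QHC. -/
theorem negNegNabla (α : PF) : ProvP QHCAx (α.neg.imp (α.nabla.imp PF.bot)) :=
  comp (bangQuest α.neg)
    (comp (nablaDist α PF.bot) (monoCtx α.nabla nablaBot))

/-! ### A natural deduction layer -/

def chain (Γ : List PF) (α : PF) : PF := Γ.foldr PF.imp α

inductive ND (Ax : PF → Prop) : List PF → PF → Prop
  | hyp {Γ α} : α ∈ Γ → ND Ax Γ α
  | thm {Γ α} : ProvP Ax α → ND Ax Γ α
  | mp {Γ α β} : ND Ax Γ (α.imp β) → ND Ax Γ α → ND Ax Γ β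
  | impI {Γ α β} : ND Ax (α :: Γ) β → ND Ax Γ (α.imp β)

theorem chain_thm {α : PF} (Γ : List PF) (h : ProvP Ax α) : ProvP Ax (chain Γ α) := by
  induction Γ with
  | nil => exact h
  | cons δ Γ ih => exact liftK δ ih

theorem chain_imp_self (α : PF) (Γ : List PF) : ProvP Ax (α.imp (chain Γ α)) := by
  induction Γ with
  | nil => exact idP α
  | cons δ Γ ih => exact comp ih (ProvP.ak (chain Γ α) δ)

theorem chain_hyp {α : PF} {Γ : List PF} (h : α ∈ Γ) : ProvP Ax (chain Γ α) := by
  induction Γ with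
  | nil => cases h
  | cons δ Γ ih =>
    rcases List.mem_cons.mp h with h | h
    · subst h; exact chain_imp_self α Γ
    · exact liftK δ (ih h)

theorem chainS (Γ : List PF) (α β : PF) :
    ProvP Ax ((chain Γ (α.imp β)).imp ((chain Γ α).imp (chain Γ β))) := by
  induction Γ with
  | nil => exact idP _
  | cons δ Γ ih =>
    exact comp (monoCtx δ ih) (ProvP.as δ (chain Γ α) (chain Γ β))

theorem chainSwap (Γ : List PF) (γ β : PF) :
    ProvP Ax ((γ.imp (chain Γ β)).imp (chain Γ (γ.imp β))) := by
  induction Γ with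
  | nil => exact idP _
  | cons δ Γ ih =>
    exact comp (cForm γ δ (chain Γ β)) (monoCtx δ ih)

theorem nd_sound {Γ : List PF} {α : PF} (h : ND Ax Γ α) : ProvP Ax (chain Γ α) := by
  induction h with
  | hyp h => exact chain_hyp h
  | thm h => exact chain_thm _ h
  | mp _ _ ih1 ih2 => exact ((chainS _ _ _).mp ih1).mp ih2
  | impI _ ih => exact (chainSwap _ _ _).mp ih

theorem nd_closed {α : PF} (h : ND Ax [] α) : ProvP Ax α := nd_sound h

/-- (∇α ∨ ¬∇α) → (¬¬∇α → ∇α), pure IPC. -/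
theorem lemKey (α : PF) :
    ProvP Ax ((α.nabla.or α.nabla.neg).imp ((α.nabla.neg.imp PF.bot).imp α.nabla)) := by
  apply nd_closed
  apply ND.impI
  have hd : ND Ax [α.nabla.or α.nabla.neg] (α.nabla.or α.nabla.neg) := ND.hyp (by simp)
  have c1 : ND Ax [α.nabla.or α.nabla.neg]
      (α.nabla.imp ((α.nabla.neg.imp PF.bot).imp α.nabla)) := ND.thm (ProvP.ak _ _)
  have c2 : ND Ax [α.nabla.or α.nabla.neg]
      (α.nabla.neg.imp ((α.nabla.neg.imp PF.bot).imp α.nabla)) := by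
    apply ND.impI; apply ND.impI
    have h1 : ND Ax [α.nabla.neg.imp PF.bot, α.nabla.neg, α.nabla.or α.nabla.neg]
        (α.nabla.neg.imp PF.bot) := ND.hyp (by simp)
    have h2 : ND Ax [α.nabla.neg.imp PF.bot, α.nabla.neg, α.nabla.or α.nabla.neg]
        α.nabla.neg := ND.hyp (by simp)
    exact ND.mp (ND.thm (ProvP.exf _)) (ND.mp h1 h2)
  exact ND.mp (ND.mp (ND.mp (ND.thm (ProvP.orE _ _ _)) c1) c2) hd

/-- ¬¬α → ¬¬∇α. -/
theorem nnNabla (α : PF) :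
    ProvP Ax (α.neg.neg.imp (α.nabla.neg.imp PF.bot)) :=
  precomp PF.bot (precomp PF.bot (bangQuest α))

end QHCProof


theorem qhc_pushout_formula (α : PF) :
    PrvP ((PF.nabla ((PF.nabla α).or (PF.neg (PF.nabla α)))).imp
      (PF.iff (PF.nabla α) (PF.neg (PF.neg α)))) := by
  open QHCProof in
  apply nd_closed
  apply ND.impI
  have h : ND QHCAx [PF.nabla ((PF.nabla α).or (PF.neg (PF.nabla α)))]
      (PF.nabla ((PF.nabla α).or (PF.neg (PF.nabla α)))) := ND.hyp (by simp)
  -- part 1 : ∇α → ¬¬α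
  have p1 : ND QHCAx [PF.nabla ((PF.nabla α).or (PF.neg (PF.nabla α)))]
      ((PF.nabla α).imp (PF.neg (PF.neg α))) := by
    apply ND.impI; apply ND.impI
    exact ND.mp (ND.mp (ND.thm (negNegNabla α)) (ND.hyp (by simp)))
      (ND.hyp (by simp))
  -- part 2 : ¬¬α → ∇α
  have p2 : ND QHCAx [PF.nabla ((PF.nabla α).or (PF.neg (PF.nabla α)))]
      ((PF.neg (PF.neg α)).imp (PF.nabla α)) := by
    apply ND.impI
    have nn : ND QHCAx [PF.neg (PF.neg α), PF.nabla ((PF.nabla α).or (PF.neg (PF.nabla α)))]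
        ((PF.nabla α).neg.imp PF.bot) :=
      ND.mp (ND.thm (nnNabla α)) (ND.hyp (by simp))
    have d1 := ND.mp (ND.thm (nablaMono (lemKey α))) (ND.hyp (by simp) :
      ND QHCAx [PF.neg (PF.neg α), PF.nabla ((PF.nabla α).or (PF.neg (PF.nabla α)))]
        (PF.nabla ((PF.nabla α).or (PF.neg (PF.nabla α)))))
    have d2 := ND.mp (ND.thm (nablaDist ((PF.nabla α).neg.imp PF.bot) (PF.nabla α))) d1
    have d3 := ND.mp d2 (ND.mp (ND.thm (ProvP.bangQuest _)) nn)
    exact ND.mp (ND.thm (nablaNabla α)) d3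
  exact ND.mp (ND.mp (ND.thm (ProvP.andI _ _)) p1) p2
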